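/- Let η ∈ [0,1] and let C be an N×N unitary matrix with (1/N) Σ_{k∈ZMod N} |(C F)_{k,k}|² ≥ 1 − η (the unitary channel of C lies in S1(η)). Let d ≥ 1, β ∈ ℂ^d with Σ_k |β_k|² = 1, p : Fin d → ZMod N, and f : ZMod N → [−1,1]. For l ∈ ZMod N define: the unitary R_l = Σ_{t∈ZMod N} (e_t e_t†) ⊗ I_d ⊗ Rot(f(t−l)) on ℂ^N ⊗ ℂ^d ⊗ ℂ²; the state |ψ_{5,l}⟩ = (C† ⊗ I_d ⊗ I_2)·R_l·(C ⊗ I_d ⊗ I_2)·((Σ_k β_k · f_{p_k+l} ⊗ e_k) ⊗ e_0); and the target |φ_{5,l}⟩ = Σ_k β_k · f_{p_k+l} ⊗ e_k ⊗ (f(p_k)·e_0 + √(1−f(p_k)²)·e_1). Then (1/N) Σ_{l∈ZMod N} (1 − |⟨φ_{5,l}, ψ_{5,l}⟩|²) ≤ 2√(2η). (This is Theorem 6.1: in the case where the eigenvalues p_k/N are exact n-bit numbers, running the HHL algorithm with C in place of F⁻¹ and C⁻¹ = C† in place of F gives average squared trace distance between the output and the ideal HHL output at most 2√(2η); the remaining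 steps of the algorithm are exact unitaries and preserve trace distance, and for unit vectors T(φ,ψ)² = 1 − |⟨φ,ψ⟩|².) -/

import Mathlib

open scoped BigOperators ComplexConjugate
open Finset Matrix

/-- The `N × N` quantum Fourier transform matrix, with entries `F j k = ω^{jk} / √N`,
where `ω = exp(2πi/N)`. -/
noncomputable def QFT (N : ℕ) [NeZero N] : Matrix (ZMod N) (ZMod N) ℂ :=
  fun j k => Complex.exp (2 * (Real.pi : ℂ) * Complex.I * (j.val : ℂ) * (k.val : ℂ) / (N : ℂ))
    / (Real.sqrt N : ℂ)

/-- The 2×2 rotation `Rot(c)` with columns `(c, √(1−c²))` and `(−√(1−c²), c)`. -/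
noncomputable def Rot (c : ℝ) : Matrix (Fin 2) (Fin 2) ℂ :=
  !![(c : ℂ), (-(Real.sqrt (1 - c ^ 2)) : ℝ); ((Real.sqrt (1 - c ^ 2) : ℝ) : ℂ), (c : ℂ)]

/-- `M ⊗ I_d ⊗ I_2` acting on `ℂ^N ⊗ ℂ^d ⊗ ℂ²`. -/
noncomputable def opTens (N d : ℕ) [NeZero N] (M : Matrix (ZMod N) (ZMod N) ℂ) :
    Matrix (ZMod N × Fin d × Fin 2) (ZMod N × Fin d × Fin 2) ℂ :=
  fun q q' => if q.2 = q'.2 then M q.1 q'.1 else 0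

/-- The controlled rotation `Σ_t (e_t e_t†) ⊗ I_d ⊗ Rot(g t)`. -/
noncomputable def ctrlRot (N d : ℕ) [NeZero N] (g : ZMod N → ℝ) :
    Matrix (ZMod N × Fin d × Fin 2) (ZMod N × Fin d × Fin 2) ℂ :=
  fun q q' => if q.1 = q'.1 ∧ q.2.1 = q'.2.1 then Rot (g q.1) q.2.2 q'.2.2 else 0

/-- The state `|φ_{2,l}⟩ ⊗ e_0 = (Σ_k β_k · f_{p_k+l} ⊗ e_k) ⊗ e_0`. -/
noncomputable def phi2 (N d : ℕ) [NeZero N] (β : Fin d → ℂ) (p : Fin d → ZMod N)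
    (l : ZMod N) : ZMod N × Fin d × Fin 2 → ℂ :=
  fun q => β q.2.1 * QFT N q.1 (p q.2.1 + l) * (if q.2.2 = 0 then 1 else 0)

/-- The target state
`|φ_{5,l}⟩ = Σ_k β_k · f_{p_k+l} ⊗ e_k ⊗ (f(p_k)·e_0 + √(1−f(p_k)²)·e_1)`. -/
noncomputable def phi5 (N d : ℕ) [NeZero N] (β : Fin d → ℂ) (p : Fin d → ZMod N)
    (f : ZMod N → ℝ) (l : ZMod N) : ZMod N × Fin d × Fin 2 → ℂ :=
  fun q => β q.2.1 * QFT N q.1 (p q.2.1 + l) *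
    (if q.2.2 = 0 then ((f (p q.2.1) : ℝ) : ℂ)
      else ((Real.sqrt (1 - f (p q.2.1) ^ 2) : ℝ) : ℂ))

lemma conj_mul_self (z : ℂ) : (starRingEnd ℂ) z * z = ((‖z‖ ^ 2 : ℝ) : ℂ) := by
  rw [mul_comm, Complex.mul_conj, ← Complex.normSq_eq_norm_sq]

lemma QFT_abs (N : ℕ) [NeZero N] (j m : ZMod N) :
    ‖QFT N j m‖ = 1 / Real.sqrt N := by
  unfold QFT
  rw [norm_div]
  have h : (2 * (Real.pi : ℂ) * Complex.I * (j.val : ℂ) * (m.val : ℂ) / (N : ℂ))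
      = ((2 * Real.pi * j.val * m.val / N : ℝ) : ℂ) * Complex.I := by push_cast; ring
  rw [h, Complex.norm_exp_ofReal_mul_I, Complex.norm_real, Real.norm_eq_abs,
    abs_of_nonneg (Real.sqrt_nonneg _)]

lemma col_norm (N : ℕ) [NeZero N] (C : Matrix (ZMod N) (ZMod N) ℂ) (hC : Cᴴ * C = 1)
    (m : ZMod N) : ∑ t : ZMod N, ‖(C * QFT N) t m‖ ^ 2 = 1 := by
  have key : ((C * QFT N)ᴴ * (C * QFT N)) m m = ((QFT N)ᴴ * QFT N) m m := by
    rw [conjTranspose_mul, Matrix.mul_assoc, ← Matrix.mul_assoc Cᴴ, hC, Matrix.one_mul]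
  have expand : ∀ (A : Matrix (ZMod N) (ZMod N) ℂ),
      (Aᴴ * A) m m = ((∑ t : ZMod N, ‖A t m‖ ^ 2 : ℝ) : ℂ) := by
    intro A
    rw [Matrix.mul_apply, Complex.ofReal_sum]
    exact Finset.sum_congr rfl fun t _ => by rw [conjTranspose_apply, Complex.star_def, conj_mul_self]
  rw [expand, expand] at key
  have key' : ∑ t : ZMod N, ‖(C * QFT N) t m‖ ^ 2
      = ∑ t : ZMod N, ‖QFT N t m‖ ^ 2 := by exact_mod_cast key
  rw [key']
  have hN : (0:ℝ) < N := Nat.cast_pos.mpr (Nat.pos_of_ne_zero (NeZero.ne N))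
  simp only [QFT_abs]
  rw [Finset.sum_const, Finset.card_univ, ZMod.card]
  rw [div_pow, one_pow, Real.sq_sqrt hN.le]
  field_simp
  rw [nsmul_eq_mul]
  field_simp

lemma bound_c_le (a b : ℝ) (ha : a ∈ Set.Icc (-1:ℝ) 1) (hb : b ∈ Set.Icc (-1:ℝ) 1) :
    a * b + Real.sqrt (1 - a ^ 2) * Real.sqrt (1 - b ^ 2) ≤ 1 := by
  obtain ⟨ha1, ha2⟩ := ha; obtain ⟨hb1, hb2⟩ := hb
  have h1 : (0:ℝ) ≤ 1 - a ^ 2 := by nlinarith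
  have h2 : (0:ℝ) ≤ 1 - b ^ 2 := by nlinarith
  nlinarith [Real.sq_sqrt h1, Real.sq_sqrt h2, sq_nonneg (a - b),
    sq_nonneg (Real.sqrt (1 - a ^ 2) - Real.sqrt (1 - b ^ 2))]

lemma bound_c_ge (a b : ℝ) (ha : a ∈ Set.Icc (-1:ℝ) 1) (hb : b ∈ Set.Icc (-1:ℝ) 1) :
    -1 ≤ a * b + Real.sqrt (1 - a ^ 2) * Real.sqrt (1 - b ^ 2) := by
  obtain ⟨ha1, ha2⟩ := ha; obtain ⟨hb1, hb2⟩ := hb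
  have h1 : (0:ℝ) ≤ 1 - a ^ 2 := by nlinarith
  have h2 : (0:ℝ) ≤ 1 - b ^ 2 := by nlinarith
  nlinarith [Real.sq_sqrt h1, Real.sq_sqrt h2, sq_nonneg (a + b),
    sq_nonneg (Real.sqrt (1 - a ^ 2) + Real.sqrt (1 - b ^ 2))]
lemma opTens_mulVec (N d : ℕ) [NeZero N] (M : Matrix (ZMod N) (ZMod N) ℂ)
    (v : ZMod N × Fin d × Fin 2 → ℂ) (q : ZMod N × Fin d × Fin 2) :
    (opTens N d M *ᵥ v) q = ∑ j : ZMod N, M q.1 j * v (j, q.2) := by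
  rw [mulVec, dotProduct, Fintype.sum_prod_type]
  refine Finset.sum_congr rfl fun j _ => ?_
  simp only [opTens, ite_mul, zero_mul]
  rw [Finset.sum_ite_eq]
  simp

lemma ctrlRot_mulVec (N d : ℕ) [NeZero N] (g : ZMod N → ℝ)
    (v : ZMod N × Fin d × Fin 2 → ℂ) (q : ZMod N × Fin d × Fin 2) :
    (ctrlRot N d g *ᵥ v) q = ∑ s : Fin 2, Rot (g q.1) q.2.2 s * v (q.1, q.2.1, s) := by
  rw [mulVec, dotProduct, Fintype.sum_prod_type]
  rw [Finset.sum_eq_single q.1]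
  · rw [Fintype.sum_prod_type, Finset.sum_eq_single q.2.1]
    · refine Finset.sum_congr rfl fun s _ => ?_
      simp [ctrlRot]
    · intro k _ hk
      apply Finset.sum_eq_zero; intro s _
      simp [ctrlRot, Ne.symm hk]
    · simp
  · intro j _ hj
    apply Finset.sum_eq_zero; intro y _
    simp [ctrlRot, Ne.symm hj]
  · simp

lemma psi5_eq (N d : ℕ) [NeZero N] (C : Matrix (ZMod N) (ZMod N) ℂ) (g : ZMod N → ℝ)
    (β : Fin d → ℂ) (p : Fin d → ZMod N) (l : ZMod N) (q : ZMod N × Fin d × Fin 2) :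
    (opTens N d Cᴴ *ᵥ (ctrlRot N d g *ᵥ (opTens N d C *ᵥ phi2 N d β p l))) q
      = β q.2.1 * ∑ t : ZMod N, (starRingEnd ℂ) (C t q.1)
          * (C * QFT N) t (p q.2.1 + l) * Rot (g t) q.2.2 0 := by
  rw [opTens_mulVec, Finset.mul_sum]
  refine Finset.sum_congr rfl fun t _ => ?_
  rw [ctrlRot_mulVec]
  have h1 : ∀ s : Fin 2, (opTens N d C *ᵥ phi2 N d β p l) (t, q.2.1, s)
      = β q.2.1 * (C * QFT N) t (p q.2.1 + l) * (if s = 0 then 1 else 0) := by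
    intro s
    rw [opTens_mulVec]
    simp only [phi2, Matrix.mul_apply, Finset.mul_sum, Finset.sum_mul]
    exact Finset.sum_congr rfl fun j _ => by ring
  simp only [h1]
  rw [Fin.sum_univ_two]
  simp [conjTranspose_apply]
  ring

lemma inner_formula (N d : ℕ) [NeZero N] (C : Matrix (ZMod N) (ZMod N) ℂ)
    (β : Fin d → ℂ) (p : Fin d → ZMod N) (f : ZMod N → ℝ) (l : ZMod N) :
    ∑ q : ZMod N × Fin d × Fin 2,
      (starRingEnd ℂ) (phi5 N d β p f l q) *
        ((opTens N d Cᴴ *ᵥ (ctrlRot N d (fun t => f (t - l)) *ᵥ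
          (opTens N d C *ᵥ phi2 N d β p l))) q)
    = ((∑ k : Fin d, ‖β k‖ ^ 2 *
        ∑ t : ZMod N, ‖(C * QFT N) t (p k + l)‖ ^ 2 *
          (f (p k) * f (t - l) +
            Real.sqrt (1 - f (p k) ^ 2) * Real.sqrt (1 - f (t - l) ^ 2)) : ℝ) : ℂ) := by
  have hpsi := psi5_eq N d C (fun t => f (t - l)) β p l
  calc
    ∑ q : ZMod N × Fin d × Fin 2,
      (starRingEnd ℂ) (phi5 N d β p f l q) *
        ((opTens N d Cᴴ *ᵥ (ctrlRot N d (fun t => f (t - l)) *ᵥ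
          (opTens N d C *ᵥ phi2 N d β p l))) q)
      = ∑ j : ZMod N, ∑ k : Fin d, ∑ s : Fin 2, ∑ t : ZMod N,
          (starRingEnd ℂ) (phi5 N d β p f l (j, k, s)) *
            (β k * ((starRingEnd ℂ) (C t j) * (C * QFT N) t (p k + l)
              * Rot (f (t - l)) s 0)) := by
        rw [Fintype.sum_prod_type]
        refine Finset.sum_congr rfl fun j _ => ?_
        rw [Fintype.sum_prod_type]
        refine Finset.sum_congr rfl fun k _ => Finset.sum_congr rfl fun s _ => ?_
        rw [hpsi]
        simp only [Finset.mul_sum]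
    _ = ∑ k : Fin d, ∑ t : ZMod N, ∑ j : ZMod N, ∑ s : Fin 2,
          (starRingEnd ℂ) (phi5 N d β p f l (j, k, s)) *
            (β k * ((starRingEnd ℂ) (C t j) * (C * QFT N) t (p k + l)
              * Rot (f (t - l)) s 0)) := by
        rw [Finset.sum_comm]
        refine Finset.sum_congr rfl fun k _ => ?_
        have h1 : ∀ (A : ZMod N → Fin 2 → ZMod N → ℂ),
            (∑ j : ZMod N, ∑ s : Fin 2, ∑ t : ZMod N, A j s t)
              = ∑ t : ZMod N, ∑ j : ZMod N, ∑ s : Fin 2, A j s t := by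
          intro A
          calc (∑ j : ZMod N, ∑ s : Fin 2, ∑ t : ZMod N, A j s t)
              = ∑ j : ZMod N, ∑ t : ZMod N, ∑ s : Fin 2, A j s t :=
                Finset.sum_congr rfl fun j _ => Finset.sum_comm
            _ = ∑ t : ZMod N, ∑ j : ZMod N, ∑ s : Fin 2, A j s t := Finset.sum_comm
        exact h1 _
    _ = ∑ k : Fin d, ∑ t : ZMod N,
          ((starRingEnd ℂ) (β k) * β k) *
            (((starRingEnd ℂ) ((C * QFT N) t (p k + l)) * (C * QFT N) t (p k + l)) *
              ((f (p k) * f (t - l) +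
                Real.sqrt (1 - f (p k) ^ 2) * Real.sqrt (1 - f (t - l) ^ 2) : ℝ) : ℂ)) := by
        refine Finset.sum_congr rfl fun k _ => Finset.sum_congr rfl fun t _ => ?_
        have hrow : ∀ j : ZMod N, (∑ s : Fin 2,
            (starRingEnd ℂ) (phi5 N d β p f l (j, k, s)) *
              (β k * ((starRingEnd ℂ) (C t j) * (C * QFT N) t (p k + l)
                * Rot (f (t - l)) s 0)))
            = (starRingEnd ℂ) (C t j * QFT N j (p k + l)) *
                (((starRingEnd ℂ) (β k) * β k) * ((C * QFT N) t (p k + l) *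
                  ((f (p k) * f (t - l) +
                    Real.sqrt (1 - f (p k) ^ 2) * Real.sqrt (1 - f (t - l) ^ 2) : ℝ) : ℂ))) := by
          intro j
          rw [Fin.sum_univ_two]
          have e00 : Rot (f (t - l)) 0 0 = ((f (t - l) : ℝ) : ℂ) := by simp [Rot]
          have e10 : Rot (f (t - l)) 1 0
              = ((Real.sqrt (1 - f (t - l) ^ 2) : ℝ) : ℂ) := by simp [Rot]
          have h10 : ((1 : Fin 2) = 0) = False := by simp
          simp only [phi5, e00, e10, _root_.map_mul, Complex.conj_ofReal,
            if_pos rfl, h10, if_false]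
          push_cast
          simp only [Complex.conj_ofReal]
          ring
        rw [Finset.sum_congr rfl fun j _ => hrow j, ← Finset.sum_mul, ← map_sum,
          ← Matrix.mul_apply]
        ring
    _ = ((∑ k : Fin d, ‖β k‖ ^ 2 *
          ∑ t : ZMod N, ‖(C * QFT N) t (p k + l)‖ ^ 2 *
            (f (p k) * f (t - l) +
              Real.sqrt (1 - f (p k) ^ 2) * Real.sqrt (1 - f (t - l) ^ 2)) : ℝ) : ℂ) := by
        rw [Complex.ofReal_sum]
        refine Finset.sum_congr rfl fun k _ => ?_
        rw [Complex.ofReal_mul, Complex.ofReal_sum, conj_mul_self, Finset.mul_sum]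
        refine Finset.sum_congr rfl fun t _ => ?_
        rw [Complex.ofReal_mul, conj_mul_self]

/-- Theorem 6.1: when the eigenvalues are exact `n`-bit numbers and HHL is run with
a unitary `C ∈ S1(η)` in place of `F⁻¹` and `C†` in place of `F`, the average
squared trace distance between output and ideal states is at most `2√(2η)`. -/
theorem hhl_with_c_and_cinv_exact (N : ℕ) [NeZero N] (η : ℝ)
    (hη : η ∈ Set.Icc (0 : ℝ) 1)
    (C : Matrix (ZMod N) (ZMod N) ℂ) (hC : Cᴴ * C = 1)
    (hS1 : (1 / N : ℝ) * ∑ k : ZMod N,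
      ‖(C * QFT N) k k‖ ^ 2 ≥ 1 - η)
    (d : ℕ) (hd : 1 ≤ d) (β : Fin d → ℂ)
    (hβ : ∑ k : Fin d, ‖β k‖ ^ 2 = 1)
    (p : Fin d → ZMod N) (f : ZMod N → ℝ) (hf : ∀ t, f t ∈ Set.Icc (-1 : ℝ) 1) :
    (1 / N : ℝ) * ∑ l : ZMod N,
      (1 - ‖∑ q : ZMod N × Fin d × Fin 2,
        (starRingEnd ℂ) (phi5 N d β p f l q) *
          ((opTens N d Cᴴ *ᵥ (ctrlRot N d (fun t => f (t - l)) *ᵥ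
            (opTens N d C *ᵥ phi2 N d β p l))) q)‖ ^ 2)
      ≤ 2 * Real.sqrt (2 * η) := by
  obtain ⟨hη0, hη1⟩ := hη
  have hN0 : (0:ℝ) < N := Nat.cast_pos.mpr (Nat.pos_of_ne_zero (NeZero.ne N))
  -- shorthand real quantities
  set S : ZMod N → ℝ := fun l => ∑ k : Fin d, ‖β k‖ ^ 2 *
      ∑ t : ZMod N, ‖(C * QFT N) t (p k + l)‖ ^ 2 *
        (f (p k) * f (t - l) +
          Real.sqrt (1 - f (p k) ^ 2) * Real.sqrt (1 - f (t - l) ^ 2)) with hSdef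
  have habs : ∀ l : ZMod N, ‖∑ q : ZMod N × Fin d × Fin 2,
      (starRingEnd ℂ) (phi5 N d β p f l q) *
        ((opTens N d Cᴴ *ᵥ (ctrlRot N d (fun t => f (t - l)) *ᵥ
          (opTens N d C *ᵥ phi2 N d β p l))) q)‖ = |S l| := by
    intro l
    rw [inner_formula N d C β p f l, Complex.norm_real, Real.norm_eq_abs]
  have hgoal : (1 / N : ℝ) * ∑ l : ZMod N,
      (1 - ‖∑ q : ZMod N × Fin d × Fin 2,
        (starRingEnd ℂ) (phi5 N d β p f l q) *
          ((opTens N d Cᴴ *ᵥ (ctrlRot N d (fun t => f (t - l)) *ᵥ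
            (opTens N d C *ᵥ phi2 N d β p l))) q)‖ ^ 2)
      = (1 / N : ℝ) * ∑ l : ZMod N, (1 - S l ^ 2) := by
    congr 1
    refine Finset.sum_congr rfl fun l _ => ?_
    rw [habs l, sq_abs]
  rw [hgoal]
  clear hgoal habs
  -- basic bounds
  have hb0 : ∀ k : Fin d, (0:ℝ) ≤ ‖β k‖ ^ 2 := fun k => sq_nonneg _
  have hw0 : ∀ t m : ZMod N, (0:ℝ) ≤ ‖(C * QFT N) t m‖ ^ 2 := fun t m => sq_nonneg _
  have hwsum : ∀ m : ZMod N, ∑ t : ZMod N, ‖(C * QFT N) t m‖ ^ 2 = 1 :=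
    col_norm N C hC
  have hccle : ∀ (a b : ZMod N), f a * f b +
      Real.sqrt (1 - f a ^ 2) * Real.sqrt (1 - f b ^ 2) ≤ 1 :=
    fun a b => bound_c_le _ _ (hf a) (hf b)
  have hccge : ∀ (a b : ZMod N), -1 ≤ f a * f b +
      Real.sqrt (1 - f a ^ 2) * Real.sqrt (1 - f b ^ 2) :=
    fun a b => bound_c_ge _ _ (hf a) (hf b)
  -- the inner sums
  have hinnerle : ∀ (k : Fin d) (l : ZMod N),
      (∑ t : ZMod N, ‖(C * QFT N) t (p k + l)‖ ^ 2 *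
        (f (p k) * f (t - l) +
          Real.sqrt (1 - f (p k) ^ 2) * Real.sqrt (1 - f (t - l) ^ 2))) ≤ 1 := by
    intro k l
    calc (∑ t : ZMod N, ‖(C * QFT N) t (p k + l)‖ ^ 2 *
          (f (p k) * f (t - l) +
            Real.sqrt (1 - f (p k) ^ 2) * Real.sqrt (1 - f (t - l) ^ 2)))
        ≤ ∑ t : ZMod N, ‖(C * QFT N) t (p k + l)‖ ^ 2 := by
          refine Finset.sum_le_sum fun t _ => ?_
          have := hccle (p k) (t - l)
          nlinarith [hw0 t (p k + l)]
      _ = 1 := hwsum (p k + l)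
  have hinnerge : ∀ (k : Fin d) (l : ZMod N),
      (-1:ℝ) ≤ ∑ t : ZMod N, ‖(C * QFT N) t (p k + l)‖ ^ 2 *
        (f (p k) * f (t - l) +
          Real.sqrt (1 - f (p k) ^ 2) * Real.sqrt (1 - f (t - l) ^ 2)) := by
    intro k l
    calc (-1:ℝ) = -∑ t : ZMod N, ‖(C * QFT N) t (p k + l)‖ ^ 2 := by
          rw [hwsum (p k + l)]
      _ ≤ _ := by
          rw [neg_le, ← Finset.sum_neg_distrib]
          refine Finset.sum_le_sum fun t _ => ?_
          have := hccge (p k) (t - l)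
          nlinarith [hw0 t (p k + l)]
  have hSle : ∀ l, S l ≤ 1 := by
    intro l
    rw [← hβ]
    simp only [hSdef]
    refine Finset.sum_le_sum fun k _ => ?_
    have := hinnerle k l
    nlinarith [hb0 k]
  have hSge : ∀ l, -1 ≤ S l := by
    intro l
    have : (-1:ℝ) = ∑ k : Fin d, ‖β k‖ ^ 2 * (-1) := by
      rw [← Finset.sum_mul, hβ]; ring
    rw [this]
    simp only [hSdef]
    refine Finset.sum_le_sum fun k _ => ?_
    have := hinnerge k l
    nlinarith [hb0 k]
  -- the key per-l estimate
  have hkey : ∀ l : ZMod N, 1 - S l ≤ 2 * ∑ k : Fin d, ‖β k‖ ^ 2 *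
      (1 - ‖(C * QFT N) (p k + l) (p k + l)‖ ^ 2) := by
    intro l
    have hcc1 : ∀ k : Fin d, f (p k) * f ((p k + l) - l) +
        Real.sqrt (1 - f (p k) ^ 2) * Real.sqrt (1 - f ((p k + l) - l) ^ 2) = 1 := by
      intro k
      have h1 : (0:ℝ) ≤ 1 - f (p k) ^ 2 := by
        obtain ⟨h1, h2⟩ := hf (p k); nlinarith
      rw [add_sub_cancel_right, Real.mul_self_sqrt h1]
      ring
    have step1 : ∀ k : Fin d,
        1 - (∑ t : ZMod N, ‖(C * QFT N) t (p k + l)‖ ^ 2 *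
          (f (p k) * f (t - l) +
            Real.sqrt (1 - f (p k) ^ 2) * Real.sqrt (1 - f (t - l) ^ 2)))
        ≤ 2 * (1 - ‖(C * QFT N) (p k + l) (p k + l)‖ ^ 2) := by
      intro k
      have expand : 1 - (∑ t : ZMod N, ‖(C * QFT N) t (p k + l)‖ ^ 2 *
          (f (p k) * f (t - l) +
            Real.sqrt (1 - f (p k) ^ 2) * Real.sqrt (1 - f (t - l) ^ 2)))
          = ∑ t : ZMod N, ‖(C * QFT N) t (p k + l)‖ ^ 2 *
            (1 - (f (p k) * f (t - l) +
              Real.sqrt (1 - f (p k) ^ 2) * Real.sqrt (1 - f (t - l) ^ 2))) := by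
        have h := hwsum (p k + l)
        calc 1 - (∑ t : ZMod N, ‖(C * QFT N) t (p k + l)‖ ^ 2 *
              (f (p k) * f (t - l) +
                Real.sqrt (1 - f (p k) ^ 2) * Real.sqrt (1 - f (t - l) ^ 2)))
            = (∑ t : ZMod N, ‖(C * QFT N) t (p k + l)‖ ^ 2) -
              ∑ t : ZMod N, ‖(C * QFT N) t (p k + l)‖ ^ 2 *
                (f (p k) * f (t - l) +
                  Real.sqrt (1 - f (p k) ^ 2) * Real.sqrt (1 - f (t - l) ^ 2)) := by
              rw [h]
          _ = _ := by
              rw [← Finset.sum_sub_distrib]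
              exact Finset.sum_congr rfl fun t _ => by ring
      rw [expand]
      have bnd : ∀ t : ZMod N, ‖(C * QFT N) t (p k + l)‖ ^ 2 *
          (1 - (f (p k) * f (t - l) +
            Real.sqrt (1 - f (p k) ^ 2) * Real.sqrt (1 - f (t - l) ^ 2)))
          ≤ 2 * ‖(C * QFT N) t (p k + l)‖ ^ 2 -
            2 * (if t = p k + l then ‖(C * QFT N) t (p k + l)‖ ^ 2 else 0) := by
        intro t
        by_cases h : t = p k + l
        · subst h
          rw [if_pos rfl, hcc1 k]
          simp
        · rw [if_neg h]
          have := hccge (p k) (t - l)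
          nlinarith [hw0 t (p k + l)]
      calc (∑ t : ZMod N, ‖(C * QFT N) t (p k + l)‖ ^ 2 *
            (1 - (f (p k) * f (t - l) +
              Real.sqrt (1 - f (p k) ^ 2) * Real.sqrt (1 - f (t - l) ^ 2))))
          ≤ ∑ t : ZMod N, (2 * ‖(C * QFT N) t (p k + l)‖ ^ 2 -
              2 * (if t = p k + l then ‖(C * QFT N) t (p k + l)‖ ^ 2 else 0)) :=
            Finset.sum_le_sum fun t _ => bnd t
        _ = 2 * (1 - ‖(C * QFT N) (p k + l) (p k + l)‖ ^ 2) := by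
            rw [Finset.sum_sub_distrib, ← Finset.mul_sum, hwsum (p k + l), ← Finset.mul_sum]
            rw [Finset.sum_ite_eq' Finset.univ (p k + l)
              (fun t => ‖(C * QFT N) t (p k + l)‖ ^ 2)]
            simp
            ring
      done
    have e1 : 1 - S l = ∑ k : Fin d, ‖β k‖ ^ 2 *
        (1 - ∑ t : ZMod N, ‖(C * QFT N) t (p k + l)‖ ^ 2 *
          (f (p k) * f (t - l) +
            Real.sqrt (1 - f (p k) ^ 2) * Real.sqrt (1 - f (t - l) ^ 2))) := by
      have h0 : (∑ k : Fin d, ‖β k‖ ^ 2 *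
          (1 - ∑ t : ZMod N, ‖(C * QFT N) t (p k + l)‖ ^ 2 *
            (f (p k) * f (t - l) +
              Real.sqrt (1 - f (p k) ^ 2) * Real.sqrt (1 - f (t - l) ^ 2))))
          = ∑ k : Fin d, (‖β k‖ ^ 2 -
            ‖β k‖ ^ 2 * ∑ t : ZMod N,
              ‖(C * QFT N) t (p k + l)‖ ^ 2 *
                (f (p k) * f (t - l) +
                  Real.sqrt (1 - f (p k) ^ 2) * Real.sqrt (1 - f (t - l) ^ 2))) :=
        Finset.sum_congr rfl fun k _ => by ring
      rw [h0, Finset.sum_sub_distrib, hβ]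
    rw [e1, Finset.mul_sum]
    refine Finset.sum_le_sum fun k _ => ?_
    have := step1 k
    nlinarith [hb0 k]
  -- summing over l
  have hxsum : (N : ℝ) * (1 - η) ≤ ∑ m : ZMod N, ‖(C * QFT N) m m‖ ^ 2 := by
    have h := hS1
    rw [ge_iff_le, div_mul_eq_mul_div, le_div_iff₀ hN0] at h
    · linarith [h]
  have hshift : ∀ k : Fin d,
      (∑ l : ZMod N, ‖(C * QFT N) (p k + l) (p k + l)‖ ^ 2)
        = ∑ m : ZMod N, ‖(C * QFT N) m m‖ ^ 2 := by
    intro k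
    exact Fintype.sum_equiv (Equiv.addLeft (p k)) _ _ (fun l => rfl)
  have havg : (∑ l : ZMod N, (1 - S l ^ 2)) ≤ 4 * (N : ℝ) * η := by
    have per_l : ∀ l : ZMod N, 1 - S l ^ 2 ≤
        4 * ∑ k : Fin d, ‖β k‖ ^ 2 *
          (1 - ‖(C * QFT N) (p k + l) (p k + l)‖ ^ 2) := by
      intro l
      have h1 := hSle l
      have h2 := hSge l
      have h3 := hkey l
      nlinarith
    calc (∑ l : ZMod N, (1 - S l ^ 2))
        ≤ ∑ l : ZMod N, 4 * ∑ k : Fin d, ‖β k‖ ^ 2 *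
            (1 - ‖(C * QFT N) (p k + l) (p k + l)‖ ^ 2) :=
          Finset.sum_le_sum fun l _ => per_l l
      _ = 4 * ∑ k : Fin d, ‖β k‖ ^ 2 *
            ∑ l : ZMod N, (1 - ‖(C * QFT N) (p k + l) (p k + l)‖ ^ 2) := by
          rw [← Finset.mul_sum, Finset.sum_comm]
          congr 1
          exact Finset.sum_congr rfl fun k _ => by rw [Finset.mul_sum]
      _ ≤ 4 * ∑ k : Fin d, ‖β k‖ ^ 2 * ((N:ℝ) * η) := by
          have hl : ∀ k : Fin d,
              (∑ l : ZMod N, (1 - ‖(C * QFT N) (p k + l) (p k + l)‖ ^ 2))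
                ≤ (N:ℝ) * η := by
            intro k
            rw [Finset.sum_sub_distrib, hshift k, Finset.sum_const, Finset.card_univ,
              ZMod.card, nsmul_eq_mul, mul_one]
            linarith [hxsum]
          have : (∑ k : Fin d, ‖β k‖ ^ 2 *
              ∑ l : ZMod N, (1 - ‖(C * QFT N) (p k + l) (p k + l)‖ ^ 2))
              ≤ ∑ k : Fin d, ‖β k‖ ^ 2 * ((N:ℝ) * η) := by
            refine Finset.sum_le_sum fun k _ => ?_
            exact mul_le_mul_of_nonneg_left (hl k) (hb0 k)
          linarith
      _ = 4 * (N:ℝ) * η := by rw [← Finset.sum_mul, hβ]; ring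
  -- conclude, splitting on η ≤ 1/2
  by_cases hcase : η ≤ 1/2
  · have h4 : (1 / N : ℝ) * ∑ l : ZMod N, (1 - S l ^ 2) ≤ 4 * η := by
      rw [div_mul_eq_mul_div, one_mul, div_le_iff₀ hN0]
      calc (∑ l : ZMod N, (1 - S l ^ 2)) ≤ 4 * (N:ℝ) * η := havg
        _ = 4 * η * N := by ring
    have h5 : 2 * η ≤ Real.sqrt (2 * η) := by
      calc 2 * η = Real.sqrt ((2 * η) ^ 2) := (Real.sqrt_sq (by linarith)).symm
        _ ≤ Real.sqrt (2 * η) := Real.sqrt_le_sqrt (by nlinarith)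
    linarith
  · push_neg at hcase
    have h4 : (1 / N : ℝ) * ∑ l : ZMod N, (1 - S l ^ 2) ≤ 1 := by
      rw [div_mul_eq_mul_div, one_mul, div_le_iff₀ hN0, one_mul]
      calc (∑ l : ZMod N, (1 - S l ^ 2)) ≤ ∑ l : ZMod N, 1 :=
          Finset.sum_le_sum fun l _ => by nlinarith [sq_nonneg (S l)]
        _ = (N:ℝ) := by rw [Finset.sum_const, Finset.card_univ, ZMod.card]; simp
    have h5 : (1:ℝ) ≤ Real.sqrt (2 * η) := by
      rw [show (1:ℝ) = Real.sqrt 1 from (Real.sqrt_one).symm]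
      exact Real.sqrt_le_sqrt (by linarith)
    linarith
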